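/- Let X and Y be scoring rules on a finite candidate set C of size m, given by non-increasing score vectors (x_1,…,x_m) and (y_1,…,y_m). Suppose there exist a profile P₁ and distinct candidates a₁, a₂ ∈ C such that the total X-score of a₁ in P₁ is strictly greater than that of a₂, while the total Y-score of a₁ in P₁ is strictly less than that of a₂ (this holds in particular whenever X and Y are different rules). Then the runoff combination X+Y is not consistent: there exist a tie-breaking order T on C and profiles P and P′ such that X+Y (using T for X, for Y, and for the runoff) elects the same candidate on P and on P′, but elects a different candidate on the concatenation P ++ P′. -/

import Mathlib

/-
Combining two different scoring rules by a run-off is not consistent.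
Votes on the finite candidate set `C` (with `m = |C|`) are duplicate-free
lists of all candidates (earlier = more preferred); positions are 1-based.
-/

variable {C : Type*} [Fintype C] [DecidableEq C]

/-- `v` is a vote: a strict linear order of all candidates. -/
def ValidVote (v : List C) : Prop := v.Nodup ∧ v.toFinset = Finset.univ

/-- `P` is a profile: a finite list of votes. -/
def ValidProfile (P : List (List C)) : Prop := ∀ v ∈ P, ValidVote v

/-- `N P x y`: the number of votes in `P` ranking `x` above `y`. -/
def pairN (P : List (List C)) (x y : C) : ℕ :=
  (P.filter fun v => v.idxOf x < v.idxOf y).length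

/-- Total score of candidate `e` in profile `P` under the scoring vector `s`
(a candidate ranked at (1-based) position `r` in a vote receives `s r`). -/
def scoreTotal (s : ℕ → ℝ) (P : List (List C)) (e : C) : ℝ :=
  (P.map fun v => s (v.idxOf e + 1)).sum

open scoped Classical in
/-- The scoring-rule winner: the `T`-greatest candidate among those of maximal
total score. -/
noncomputable def scoringWinner [Nonempty C] (T : LinearOrder C) (s : ℕ → ℝ)
    (P : List (List C)) : C :=
  @Finset.max' C T (Finset.univ.filter fun e => ∀ z, scoreTotal s P z ≤ scoreTotal s P e) (by
    obtain ⟨b, hb, hm⟩ :=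
      Finset.exists_max_image Finset.univ (scoreTotal s P) Finset.univ_nonempty
    exact ⟨b, Finset.mem_filter.2 ⟨Finset.mem_univ _, fun z => hm z (Finset.mem_univ _)⟩⟩)

/-- Run-off combination `X + Y`: the common winner if `X` and `Y` agree;
otherwise the pairwise-majority winner between the two winners, with the
`T`-greater candidate winning a tied run-off. -/
noncomputable def runoffWinner (T : LinearOrder C) (X Y : List (List C) → C)
    (P : List (List C)) : C :=
  let x := X P
  let y := Y P
  if x = y then x
  else if pairN P y x < pairN P x y then x
  else if pairN P x y < pairN P y x then y
  else if T.lt x y then y else x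

set_option linter.unusedSectionVars false

/-- `n` copies of a profile. -/
def rep (n : ℕ) (P : List (List C)) : List (List C) := (List.replicate n P).flatten

lemma scoreTotal_append (s : ℕ → ℝ) (P Q : List (List C)) (e : C) :
    scoreTotal s (P ++ Q) e = scoreTotal s P e + scoreTotal s Q e := by
  simp [scoreTotal]

lemma scoreTotal_cons (s : ℕ → ℝ) (v : List C) (P : List (List C)) (e : C) :
    scoreTotal s (v :: P) e = s (v.idxOf e + 1) + scoreTotal s P e := by
  simp [scoreTotal]

lemma rep_succ (n : ℕ) (P : List (List C)) : rep (n+1) P = P ++ rep n P := by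
  simp [rep, List.replicate_succ]

lemma scoreTotal_rep (s : ℕ → ℝ) (n : ℕ) (P : List (List C)) (e : C) :
    scoreTotal s (rep n P) e = n * scoreTotal s P e := by
  induction n with
  | zero => simp [rep, scoreTotal]
  | succ n ih => rw [rep_succ, scoreTotal_append, ih]; push_cast; ring

lemma pairN_append (P Q : List (List C)) (a b : C) :
    pairN (P ++ Q) a b = pairN P a b + pairN Q a b := by
  simp [pairN]

lemma pairN_cons (v : List C) (P : List (List C)) (a b : C) :
    pairN (v :: P) a b = (if v.idxOf a < v.idxOf b then 1 else 0) + pairN P a b := by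
  simp [pairN, List.filter_cons]
  split <;> simp [List.length_cons] <;> omega

lemma pairN_rep (n : ℕ) (P : List (List C)) (a b : C) :
    pairN (rep n P) a b = n * pairN P a b := by
  induction n with
  | zero => simp [rep, pairN]
  | succ n ih => rw [rep_succ, pairN_append, ih]; ring

lemma pairN_le_length (P : List (List C)) (a b : C) : pairN P a b ≤ P.length :=
  List.length_filter_le _ _

lemma validProfile_append {P Q : List (List C)} (hP : ValidProfile P) (hQ : ValidProfile Q) :
    ValidProfile (P ++ Q) := by
  intro v hv; rcases List.mem_append.1 hv with h | h; exacts [hP v h, hQ v h]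

lemma validProfile_rep {P : List (List C)} (hP : ValidProfile P) (n : ℕ) :
    ValidProfile (rep n P) := by
  induction n with
  | zero => intro v hv; simp [rep] at hv
  | succ n ih => rw [rep_succ]; exact validProfile_append hP ih

lemma valid_length {v : List C} (hv : ValidVote v) : v.length = Fintype.card C := by
  rw [← List.toFinset_card_of_nodup hv.1, hv.2, Finset.card_univ]

lemma mem_of_valid {v : List C} (hv : ValidVote v) (e : C) : e ∈ v := by
  rw [← List.mem_toFinset, hv.2]; exact Finset.mem_univ e

lemma indexOf_lt_card {v : List C} (hv : ValidVote v) (e : C) :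
    v.idxOf e < Fintype.card C := by
  rw [← valid_length hv]; exact List.idxOf_lt_length_iff.2 (mem_of_valid hv e)

lemma indexOf_ne_of_valid {v : List C} (hv : ValidVote v) {a b : C} (hab : a ≠ b) :
    v.idxOf a ≠ v.idxOf b := by
  intro h
  exact hab (List.idxOf_inj (mem_of_valid hv a) |>.1 h)

lemma pairN_add_pairN {P : List (List C)} (hP : ValidProfile P) {a b : C} (hab : a ≠ b) :
    pairN P a b + pairN P b a = P.length := by
  induction P with
  | nil => simp [pairN]
  | cons v P ih =>
    have hv := hP v (List.mem_cons_self)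
    have hP' : ValidProfile P := fun u hu => hP u (List.mem_cons_of_mem _ hu)
    have hne := indexOf_ne_of_valid hv hab
    rw [pairN_cons, pairN_cons, List.length_cons, ← ih hP']
    rcases lt_or_gt_of_ne hne with h | h
    · rw [if_pos h, if_neg (by omega)]; ring
    · rw [if_neg (by omega), if_pos h]; ring

/-! ### rotation sums -/

lemma indexOf_rotate {w : List C} (hw : w.Nodup) {e : C} (he : e ∈ w) {i : ℕ}
    (hi : i < w.length) :
    (w.rotate i).idxOf e =
      if i ≤ w.idxOf e then w.idxOf e - i else w.idxOf e + (w.length - i) := by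
  have hidx : w.idxOf e < w.length := List.idxOf_lt_length_iff.2 he
  set L := w.length with hL
  set idx := w.idxOf e with hidxdef
  set j : ℕ := if i ≤ idx then idx - i else idx + (L - i) with hj
  have hjL : j < L := by rw [hj]; split <;> omega
  have hmem : e ∈ w.rotate i := List.mem_rotate.2 he
  have hlenr : (w.rotate i).length = L := by rw [List.length_rotate]
  have hmod : (j + i) % L = idx := by
    rw [hj]; split
    · rw [Nat.mod_eq_of_lt (by omega)]; omega
    · have h1 : idx + (L - i) + i = idx + L := by omega
      rw [h1, Nat.add_mod_right]
      exact Nat.mod_eq_of_lt hidx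
  have hget : (w.rotate i)[j]'(by omega) = e := by
    simp only [List.getElem_rotate, ← hL, hmod]
    exact List.getElem_idxOf hidx
  have hget2 : (w.rotate i)[(w.rotate i).idxOf e]'(List.idxOf_lt_length_iff.2 hmem) = e :=
    List.getElem_idxOf _
  have hnr : (w.rotate i).Nodup := List.nodup_rotate.2 hw
  exact (hnr.getElem_inj_iff).1 (hget2.trans hget.symm)

lemma sum_f_rotate {w : List C} (hw : w.Nodup) {e : C} (he : e ∈ w) (f : ℕ → ℝ) :
    ∑ i ∈ Finset.range w.length, f ((w.rotate i).idxOf e)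
      = ∑ j ∈ Finset.range w.length, f j := by
  have hidx : w.idxOf e < w.length := List.idxOf_lt_length_iff.2 he
  set L := w.length with hL
  set idx := w.idxOf e with hidxdef
  set g : ℕ → ℕ := fun i => if i ≤ idx then idx - i else idx + (L - i) with hg
  have hcong : ∀ i ∈ Finset.range L, f ((w.rotate i).idxOf e) = f (g i) := by
    intro i hi
    rw [indexOf_rotate hw he (Finset.mem_range.1 hi)]
  rw [Finset.sum_congr rfl hcong]
  refine Finset.sum_nbij' (i := g) (j := g) ?_ ?_ ?_ ?_ ?_
  · intro a ha; simp only [Finset.mem_range] at ha ⊢; simp only [hg]; split <;> omega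
  · intro a ha; simp only [Finset.mem_range] at ha ⊢; simp only [hg]; split <;> omega
  · intro a ha; simp only [Finset.mem_range] at ha; simp only [hg]; split_ifs <;> omega
  · intro a ha; simp only [Finset.mem_range] at ha; simp only [hg]; split_ifs <;> omega
  · intro a ha; rfl

/-! ### blocks -/

/-- the other candidates. -/
noncomputable def others (a : C) : List C := (Finset.univ.erase a).toList

lemma length_others (a : C) : (others a).length = Fintype.card C - 1 := by
  simp [others, Finset.length_toList, Finset.card_erase_of_mem]

lemma nodup_others (a : C) : (others a).Nodup := Finset.nodup_toList _

lemma mem_others {a e : C} : e ∈ others a ↔ e ≠ a := by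
  simp [others]

/-- `a` on top, the others rotated through all cyclic shifts. -/
noncomputable def rotBlock (a : C) : List (List C) :=
  (List.range (others a).length).map (fun i => a :: (others a).rotate i)

lemma validProfile_rotBlock (a : C) : ValidProfile (rotBlock a) := by
  intro v hv
  simp only [rotBlock, List.mem_map, List.mem_range] at hv
  obtain ⟨i, _, rfl⟩ := hv
  constructor
  · rw [List.nodup_cons]
    refine ⟨fun h => ?_, List.nodup_rotate.2 (nodup_others a)⟩
    exact (mem_others.1 (List.mem_rotate.1 h)) rfl
  · have hperm : ((others a).rotate i).toFinset = (others a).toFinset :=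
      List.toFinset_eq_of_perm _ _ (List.rotate_perm (others a) i)
    rw [List.toFinset_cons, hperm]
    simp only [others, Finset.toList_toFinset]
    exact Finset.insert_erase (Finset.mem_univ a)

lemma list_sum_map_range (n : ℕ) (f : ℕ → ℝ) :
    ((List.range n).map f).sum = ∑ i ∈ Finset.range n, f i := by
  induction n with
  | zero => simp
  | succ n ih =>
    rw [List.range_succ, Finset.sum_range_succ, List.map_append, List.sum_append, ih]; simp

lemma scoreTotal_rotBlock_self (s : ℕ → ℝ) (a : C) :
    scoreTotal s (rotBlock a) a = ((others a).length : ℝ) * s 1 := by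
  unfold scoreTotal rotBlock
  rw [List.map_map]
  simp only [Function.comp_def, List.idxOf_cons_self]
  rw [list_sum_map_range]
  simp [nsmul_eq_mul]

lemma scoreTotal_rotBlock_ne (s : ℕ → ℝ) {a e : C} (he : e ≠ a) :
    scoreTotal s (rotBlock a) e = ∑ j ∈ Finset.range (others a).length, s (j + 2) := by
  unfold scoreTotal rotBlock
  rw [List.map_map]
  have h1 : ∀ i, ((a :: (others a).rotate i).idxOf e + 1)
      = ((others a).rotate i).idxOf e + 2 := by
    intro i; rw [List.idxOf_cons_ne _ (Ne.symm he)]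
  simp only [Function.comp_def, h1]
  rw [list_sum_map_range]
  exact sum_f_rotate (nodup_others a) (mem_others.2 he) (fun k => s (k + 2))

lemma pairN_rotBlock_top {a z : C} (hz : z ≠ a) :
    pairN (rotBlock a) a z = (others a).length := by
  unfold pairN
  have hfil : (rotBlock a).filter (fun v => v.idxOf a < v.idxOf z) = rotBlock a := by
    rw [List.filter_eq_self]
    intro v hv
    simp only [rotBlock, List.mem_map, List.mem_range] at hv
    obtain ⟨i, _, rfl⟩ := hv
    simp [List.idxOf_cons_self, List.idxOf_cons_ne _ (Ne.symm hz)]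
  rw [hfil, rotBlock, List.length_map, List.length_range]

lemma pairN_rotBlock_bot {a z : C} (hz : z ≠ a) :
    pairN (rotBlock a) z a = 0 := by
  unfold pairN
  rw [List.length_eq_zero_iff, List.filter_eq_nil_iff]
  intro v hv
  simp only [rotBlock, List.mem_map, List.mem_range] at hv
  obtain ⟨i, _, rfl⟩ := hv
  simp [List.idxOf_cons_self, List.idxOf_cons_ne _ (Ne.symm hz)]

/-! ### the cyclic 3-vote block -/

noncomputable def restList (a₁ a₂ b : C) : List C :=
  (((Finset.univ.erase a₁).erase a₂).erase b).toList

noncomputable def Kblock (a₁ a₂ b : C) : List (List C) :=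
  [a₁ :: b :: a₂ :: restList a₁ a₂ b,
   a₂ :: a₁ :: b :: restList a₁ a₂ b,
   b :: a₂ :: a₁ :: restList a₁ a₂ b]

variable {a₁ a₂ b : C}

lemma mem_restList {z : C} : z ∈ restList a₁ a₂ b ↔ (z ≠ a₁ ∧ z ≠ a₂ ∧ z ≠ b) := by
  simp [restList]; tauto

lemma restList_toFinset :
    (restList a₁ a₂ b).toFinset = ((Finset.univ.erase a₁).erase a₂).erase b :=
  Finset.toList_toFinset _

section K
variable (h12 : a₁ ≠ a₂) (h1b : a₁ ≠ b) (h2b : a₂ ≠ b)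
include h12 h1b h2b

lemma length_restList (hm : 3 ≤ Fintype.card C) :
    (restList a₁ a₂ b).length = Fintype.card C - 3 := by
  rw [restList, Finset.length_toList]
  rw [Finset.card_erase_of_mem, Finset.card_erase_of_mem, Finset.card_erase_of_mem]
  · simp only [Finset.card_univ]; omega
  · exact Finset.mem_univ _
  · exact Finset.mem_erase.2 ⟨Ne.symm h12, Finset.mem_univ _⟩
  · exact Finset.mem_erase.2 ⟨Ne.symm h2b, Finset.mem_erase.2 ⟨Ne.symm h1b, Finset.mem_univ _⟩⟩

lemma validProfile_Kblock : ValidProfile (Kblock a₁ a₂ b) := by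
  have hnd : (restList a₁ a₂ b).Nodup := Finset.nodup_toList _
  have hni : ∀ z : C, (z = a₁ ∨ z = a₂ ∨ z = b) → z ∉ restList a₁ a₂ b := by
    intro z hz hmem; rcases mem_restList.1 hmem with ⟨u1, u2, u3⟩; tauto
  have key : ∀ u1 u2 u3 : C, u1 ≠ u2 → u1 ≠ u3 → u2 ≠ u3 →
      u1 ∉ restList a₁ a₂ b → u2 ∉ restList a₁ a₂ b → u3 ∉ restList a₁ a₂ b →
      ({u1, u2, u3} : Finset C) = {a₁, a₂, b} →
      ValidVote (u1 :: u2 :: u3 :: restList a₁ a₂ b) := by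
    intro u1 u2 u3 n12 n13 n23 m1 m2 m3 hset
    constructor
    · simp only [List.nodup_cons, List.mem_cons]
      refine ⟨?_, ?_, m3, hnd⟩ <;> push_neg
      · exact ⟨n12, n13, m1⟩
      · exact ⟨n23, m2⟩
    · simp only [List.toFinset_cons]
      have h1 : insert u1 (insert u2 (insert u3 (restList a₁ a₂ b).toFinset))
          = ({u1, u2, u3} : Finset C) ∪ (restList a₁ a₂ b).toFinset := by
        ext z; simp
      rw [h1, hset, restList_toFinset]
      ext z
      simp only [Finset.mem_union, Finset.mem_insert, Finset.mem_singleton, Finset.mem_erase,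
        Finset.mem_univ, iff_true, and_true]
      tauto
  intro v hv
  simp only [Kblock, List.mem_cons, List.mem_singleton] at hv
  have hh := hni
  rcases hv with rfl | rfl | rfl | h
  · exact key _ _ _ h1b h12 (Ne.symm h2b) (hni _ (by tauto)) (hni _ (by tauto))
      (hni _ (by tauto)) (by ext z; simp; tauto)
  · exact key _ _ _ (Ne.symm h12) h2b h1b (hni _ (by tauto)) (hni _ (by tauto))
      (hni _ (by tauto)) (by ext z; simp; tauto)
  · exact key _ _ _ (Ne.symm h2b) (Ne.symm h1b) (Ne.symm h12) (hni _ (by tauto)) (hni _ (by tauto))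
      (hni _ (by tauto)) (by ext z; simp; tauto)
  · simp at h

lemma scoreK_a₁ (s : ℕ → ℝ) :
    scoreTotal s (Kblock a₁ a₂ b) a₁ = s 1 + s 2 + s 3 := by
  simp only [Kblock, scoreTotal, List.map_cons, List.map_nil, List.sum_cons, List.sum_nil,
    List.idxOf_cons_self, List.idxOf_cons_ne _ (Ne.symm h12),
    List.idxOf_cons_ne _ (Ne.symm h1b)]
  norm_num
  ring

lemma scoreK_a₂ (s : ℕ → ℝ) :
    scoreTotal s (Kblock a₁ a₂ b) a₂ = s 1 + s 2 + s 3 := by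
  simp only [Kblock, scoreTotal, List.map_cons, List.map_nil, List.sum_cons, List.sum_nil,
    List.idxOf_cons_self, List.idxOf_cons_ne _ h12,
    List.idxOf_cons_ne _ (Ne.symm h2b)]
  norm_num
  ring

lemma scoreK_b (s : ℕ → ℝ) :
    scoreTotal s (Kblock a₁ a₂ b) b = s 1 + s 2 + s 3 := by
  simp only [Kblock, scoreTotal, List.map_cons, List.map_nil, List.sum_cons, List.sum_nil,
    List.idxOf_cons_self, List.idxOf_cons_ne _ h1b,
    List.idxOf_cons_ne _ h2b]
  norm_num
  ring

lemma scoreK_other (s : ℕ → ℝ) {z : C} (hz : z ∈ restList a₁ a₂ b) :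
    scoreTotal s (Kblock a₁ a₂ b) z = 3 * s ((restList a₁ a₂ b).idxOf z + 4) := by
  obtain ⟨hz1, hz2, hzb⟩ := mem_restList.1 hz
  simp only [Kblock, scoreTotal, List.map_cons, List.map_nil, List.sum_cons, List.sum_nil,
    List.idxOf_cons_ne _ (Ne.symm hz1), List.idxOf_cons_ne _ (Ne.symm hz2),
    List.idxOf_cons_ne _ (Ne.symm hzb)]
  have h4 : ((restList a₁ a₂ b).idxOf z).succ.succ.succ + 1 = (restList a₁ a₂ b).idxOf z + 4 := rfl
  rw [h4]
  ring

lemma pairN_K_12 : pairN (Kblock a₁ a₂ b) a₁ a₂ = 1 := by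
  simp only [Kblock]
  rw [pairN_cons, pairN_cons, pairN_cons]
  simp only [List.idxOf_cons_self, List.idxOf_cons_ne _ (Ne.symm h12),
    List.idxOf_cons_ne _ (Ne.symm h1b), List.idxOf_cons_ne _ h12,
    List.idxOf_cons_ne _ (Ne.symm h2b)]
  norm_num [pairN]

lemma pairN_K_21 : pairN (Kblock a₁ a₂ b) a₂ a₁ = 2 := by
  simp only [Kblock]
  rw [pairN_cons, pairN_cons, pairN_cons]
  simp only [List.idxOf_cons_self, List.idxOf_cons_ne _ (Ne.symm h12),
    List.idxOf_cons_ne _ (Ne.symm h1b), List.idxOf_cons_ne _ h12,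
    List.idxOf_cons_ne _ (Ne.symm h2b)]
  norm_num [pairN]

end K

lemma scoringWinner_eq [Nonempty C] (T : LinearOrder C) (s : ℕ → ℝ) (P : List (List C))
    (w : C) (hw : ∀ z, scoreTotal s P z ≤ scoreTotal s P w) (hT : ∀ z, T.le z w) :
    scoringWinner T s P = w := by
  classical
  letI := T
  unfold scoringWinner
  refine le_antisymm ?_ ?_
  · exact Finset.max'_le _ _ _ (fun z _ => hT z)
  · exact Finset.le_max' _ _ (Finset.mem_filter.2 ⟨Finset.mem_univ _, hw⟩)

lemma scoringWinner_eq_strict [Nonempty C] (T : LinearOrder C) (s : ℕ → ℝ) (P : List (List C))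
    (w : C) (hw : ∀ z, z ≠ w → scoreTotal s P z < scoreTotal s P w) :
    scoringWinner T s P = w := by
  classical
  letI := T
  unfold scoringWinner
  have hfil : (Finset.univ.filter fun e => ∀ z, scoreTotal s P z ≤ scoreTotal s P e) = {w} := by
    ext z
    simp only [Finset.mem_filter, Finset.mem_univ, true_and, Finset.mem_singleton]
    constructor
    · intro h
      by_contra hzw
      exact absurd (h w) (not_le.2 (hw z hzw))
    · rintro rfl u
      by_cases hu : u = z
      · exact le_of_eq (by rw [hu])
      · exact (hw u hu).le
  refine le_antisymm (Finset.max'_le _ _ _ ?_) (Finset.le_max' _ _ ?_)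
  · intro z hz
    rw [hfil, Finset.mem_singleton] at hz
    exact le_of_eq hz
  · rw [hfil]
    exact Finset.mem_singleton_self w

lemma runoff_agree (T : LinearOrder C) (X Y : List (List C) → C) (P : List (List C))
    (h : X P = Y P) : runoffWinner T X Y P = X P := by
  simp [runoffWinner, h]

lemma runoff_first (T : LinearOrder C) (X Y : List (List C) → C) (P : List (List C))
    (hne : X P ≠ Y P) (hle : pairN P (Y P) (X P) ≤ pairN P (X P) (Y P))
    (hT : ¬ T.lt (X P) (Y P)) : runoffWinner T X Y P = X P := by
  simp only [runoffWinner]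
  split_ifs with h1 h2 h3 <;> first | rfl | omega

lemma runoff_second (T : LinearOrder C) (X Y : List (List C) → C) (P : List (List C))
    (hne : X P ≠ Y P) (hlt : pairN P (X P) (Y P) < pairN P (Y P) (X P)) :
    runoffWinner T X Y P = Y P := by
  simp only [runoffWinner]
  split_ifs with h1 h2 h3 h4 <;> first | rfl | exact h1 | omega

lemma runoff_comm (T : LinearOrder C) (X Y : List (List C) → C) (P : List (List C)) :
    runoffWinner T X Y P = runoffWinner T Y X P := by
  letI := T
  by_cases h : X P = Y P
  · simp [runoffWinner, h]
  · simp only [runoffWinner]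
    split_ifs with h1 h2 h3 h4 h5 h6 h7 h8 h9 h10 <;>
      first
      | rfl
      | omega
      | (exact absurd ‹X P = Y P› h)
      | (exact absurd (Eq.symm ‹Y P = X P›) h)
      | (exact absurd (le_antisymm (not_lt.1 ‹¬X P < Y P›) (not_lt.1 ‹¬Y P < X P›)) (Ne.symm h))
      | (exact absurd ‹Y P < X P› (not_lt.2 (le_of_lt ‹X P < Y P›)))

/-- A linear order with `top` as greatest element. -/
noncomputable def topOrder (top : C) : LinearOrder C :=
  LinearOrder.lift'
    (fun c => if c = top then Fintype.card C else (Fintype.equivFin C c : ℕ))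
    (by
      intro u v huv
      dsimp only at huv
      by_cases hu : u = top <;> by_cases hv : v = top
      · rw [hu, hv]
      · rw [if_pos hu, if_neg hv] at huv
        exact absurd huv.symm (Nat.ne_of_lt (Fintype.equivFin C v).2)
      · rw [if_neg hu, if_pos hv] at huv
        exact absurd huv (Nat.ne_of_lt (Fintype.equivFin C u).2)
      · rw [if_neg hu, if_neg hv] at huv
        exact (Fintype.equivFin C).injective (Fin.val_injective huv))

lemma topOrder_le (top : C) (z : C) : (topOrder top).le z top := by
  show (if z = top then Fintype.card C else ((Fintype.equivFin C) z : ℕ))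
      ≤ (if top = top then Fintype.card C else _)
  rw [if_pos rfl]
  split
  · exact le_rfl
  · exact (Fintype.equivFin C z).2.le

lemma topOrder_not_lt (top : C) (z : C) : ¬ (topOrder top).lt top z := by
  intro h
  rw [(topOrder top).lt_iff_le_not_ge] at h
  exact h.2 (topOrder_le top z)

/-! ### degenerate cases -/

lemma scoreTotal_const (s : ℕ → ℝ) (hs : ∀ r, 1 ≤ r → r ≤ Fintype.card C → s r = s 1)
    {P : List (List C)} (hP : ValidProfile P) (e : C) :
    scoreTotal s P e = P.length * s 1 := by
  induction P with
  | nil => simp [scoreTotal]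
  | cons v P ih =>
    have hv := hP v (List.mem_cons_self)
    have hP' : ValidProfile P := fun u hu => hP u (List.mem_cons_of_mem _ hu)
    rw [scoreTotal_cons, ih hP', hs (v.idxOf e + 1) (by omega)
      (by have := indexOf_lt_card hv e; omega)]
    simp only [List.length_cons]; push_cast; ring

lemma score_diff_two (hm : Fintype.card C = 2) (s : ℕ → ℝ)
    {P : List (List C)} (hP : ValidProfile P) {a b : C} (hab : a ≠ b) :
    scoreTotal s P a - scoreTotal s P b
      = ((pairN P a b : ℝ) - (pairN P b a : ℝ)) * (s 1 - s 2) := by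
  induction P with
  | nil => simp [scoreTotal, pairN]
  | cons v P ih =>
    have hv := hP v (List.mem_cons_self)
    have hP' : ValidProfile P := fun u hu => hP u (List.mem_cons_of_mem _ hu)
    have ha : v.idxOf a < 2 := by have := indexOf_lt_card hv a; omega
    have hb : v.idxOf b < 2 := by have := indexOf_lt_card hv b; omega
    have hne := indexOf_ne_of_valid hv hab
    rw [scoreTotal_cons, scoreTotal_cons, pairN_cons, pairN_cons]
    have hcase : (v.idxOf a = 0 ∧ v.idxOf b = 1) ∨ (v.idxOf a = 1 ∧ v.idxOf b = 0) := by
      omega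
    rcases hcase with ⟨h1, h2⟩ | ⟨h1, h2⟩ <;> rw [h1, h2] <;>
      · norm_num
        push_cast
        linarith [ih hP']

/-! ### main auxiliary lemma -/

lemma main_aux [Nonempty C]
    (x y : ℕ → ℝ)
    (hx : ∀ r r', 1 ≤ r → r ≤ r' → r' ≤ Fintype.card C → x r' ≤ x r)
    (hy : ∀ r r', 1 ≤ r → r ≤ r' → r' ≤ Fintype.card C → y r' ≤ y r)
    (P₁ : List (List C)) (hP₁ : ValidProfile P₁)
    (a₁ a₂ : C) (ha : a₁ ≠ a₂)
    (hXgt : scoreTotal x P₁ a₂ < scoreTotal x P₁ a₁)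
    (hYlt : scoreTotal y P₁ a₁ < scoreTotal y P₁ a₂)
    (hδ : pairN P₁ a₂ a₁ ≤ pairN P₁ a₁ a₂) :
    ∃ (T : LinearOrder C) (P P' : List (List C)),
      ValidProfile P ∧ ValidProfile P' ∧
      runoffWinner T (scoringWinner T x) (scoringWinner T y) P
        = runoffWinner T (scoringWinner T x) (scoringWinner T y) P' ∧
      runoffWinner T (scoringWinner T x) (scoringWinner T y) (P ++ P')
        ≠ runoffWinner T (scoringWinner T x) (scoringWinner T y) P := by
  classical
  set m := Fintype.card C with hm
  -- m ≥ 2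
  have hnt : Nontrivial C := ⟨⟨a₁, a₂, ha⟩⟩
  have hm2 : 2 ≤ m := Fintype.one_lt_card
  -- m ≠ 2
  have hmne2 : m ≠ 2 := by
    intro h2
    have hdX := score_diff_two (hm ▸ h2) x hP₁ ha
    have hdY := score_diff_two (hm ▸ h2) y hP₁ ha
    have hx12 : x 2 ≤ x 1 := hx 1 2 le_rfl (by norm_num) (by omega)
    have hy12 : y 2 ≤ y 1 := hy 1 2 le_rfl (by norm_num) (by omega)
    rcases le_or_gt ((pairN P₁ a₁ a₂ : ℝ) - (pairN P₁ a₂ a₁ : ℝ)) 0 with hA | hA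
    · nlinarith
    · nlinarith
  have hm3 : 3 ≤ m := by omega
  -- a third candidate
  have hbne : ((Finset.univ.erase a₁).erase a₂).Nonempty := by
    rw [← Finset.card_pos, Finset.card_erase_of_mem
      (Finset.mem_erase.2 ⟨Ne.symm ha, Finset.mem_univ _⟩), Finset.card_erase_of_mem
      (Finset.mem_univ _), Finset.card_univ]
    omega
  obtain ⟨b, hbmem⟩ := hbne
  have hb2 : b ≠ a₂ := (Finset.mem_erase.1 hbmem).1
  have hb1 : b ≠ a₁ := (Finset.mem_erase.1 (Finset.mem_erase.1 hbmem).2).1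
  have h1b : a₁ ≠ b := Ne.symm hb1
  have h2b : a₂ ≠ b := Ne.symm hb2
  -- nonconstancy
  have hx1m : x m < x 1 := by
    by_contra hcon
    have hconst : ∀ r, 1 ≤ r → r ≤ m → x r = x 1 := by
      intro r h1 h2
      have hr1 := hx 1 r le_rfl h1 h2
      have hrm := hx r m h1 h2 le_rfl
      push_neg at hcon
      linarith
    rw [scoreTotal_const x hconst hP₁ a₁, scoreTotal_const x hconst hP₁ a₂] at hXgt
    exact lt_irrefl _ hXgt
  have hy1m : y m < y 1 := by
    by_contra hcon
    have hconst : ∀ r, 1 ≤ r → r ≤ m → y r = y 1 := by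
      intro r h1 h2
      have hr1 := hy 1 r le_rfl h1 h2
      have hrm := hy r m h1 h2 le_rfl
      push_neg at hcon
      linarith
    rw [scoreTotal_const y hconst hP₁ a₁, scoreTotal_const y hconst hP₁ a₂] at hYlt
    exact lt_irrefl _ hYlt
  -- sums and gaps
  set M1 : ℝ := ((m - 1 : ℕ) : ℝ) with hM1
  set Sx : ℝ := ∑ j ∈ Finset.range (m - 1), x (j + 2) with hSx
  set Sy : ℝ := ∑ j ∈ Finset.range (m - 1), y (j + 2) with hSy
  have gap_pos : ∀ s : ℕ → ℝ, (∀ r r', 1 ≤ r → r ≤ r' → r' ≤ m → s r' ≤ s r) → s m < s 1 →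
      0 < M1 * s 1 - ∑ j ∈ Finset.range (m - 1), s (j + 2) := by
    intro s hmono h1m
    have hrw : M1 * s 1 - ∑ j ∈ Finset.range (m - 1), s (j + 2)
        = ∑ j ∈ Finset.range (m - 1), (s 1 - s (j + 2)) := by
      rw [Finset.sum_sub_distrib, Finset.sum_const, Finset.card_range, hM1, nsmul_eq_mul]
    rw [hrw]
    apply Finset.sum_pos'
    · intro j hj
      have : j + 2 ≤ m := by have := Finset.mem_range.1 hj; omega
      have := hmono 1 (j + 2) le_rfl (by omega) this
      linarith
    · refine ⟨m - 2, Finset.mem_range.2 (by omega), ?_⟩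
      have hmm : m - 2 + 2 = m := by omega
      rw [hmm]
      linarith
  have hgx : 0 < M1 * x 1 - Sx := gap_pos x hx hx1m
  have hgy : 0 < M1 * y 1 - Sy := gap_pos y hy hy1m
  -- score bounds from P₁
  have hBne : (Finset.univ.image fun c => scoreTotal x P₁ c - scoreTotal x P₁ a₁).Nonempty :=
    Finset.Nonempty.image Finset.univ_nonempty _
  have hBne' : (Finset.univ.image fun c => scoreTotal y P₁ c - scoreTotal y P₁ a₂).Nonempty :=
    Finset.Nonempty.image Finset.univ_nonempty _
  set Bx : ℝ := (Finset.univ.image fun c => scoreTotal x P₁ c - scoreTotal x P₁ a₁).max' hBne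
    with hBxdef
  set By : ℝ := (Finset.univ.image fun c => scoreTotal y P₁ c - scoreTotal y P₁ a₂).max' hBne'
    with hBydef
  have hBx : ∀ c, scoreTotal x P₁ c - scoreTotal x P₁ a₁ ≤ Bx := fun c =>
    Finset.le_max' _ _ (Finset.mem_image_of_mem
      (fun c => scoreTotal x P₁ c - scoreTotal x P₁ a₁) (Finset.mem_univ c))
  have hBy : ∀ c, scoreTotal y P₁ c - scoreTotal y P₁ a₂ ≤ By := fun c =>
    Finset.le_max' _ _ (Finset.mem_image_of_mem
      (fun c => scoreTotal y P₁ c - scoreTotal y P₁ a₂) (Finset.mem_univ c))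
  -- parameters
  have hdy : 0 < scoreTotal y P₁ a₂ - scoreTotal y P₁ a₁ := by linarith
  obtain ⟨n, hn⟩ := exists_nat_gt ((M1 * y 1 - Sy) / (scoreTotal y P₁ a₂ - scoreTotal y P₁ a₁))
  have hny : M1 * y 1 - Sy < n * (scoreTotal y P₁ a₂ - scoreTotal y P₁ a₁) :=
    (div_lt_iff₀ hdy).1 hn
  have hn0 : (0 : ℝ) < n := lt_trans (div_pos hgy hdy) hn
  obtain ⟨t, ht⟩ := exists_nat_gt
    (max ((n * Bx) / (M1 * x 1 - Sx)) ((n * By) / (M1 * y 1 - Sy)))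
  have htx : n * Bx < t * (M1 * x 1 - Sx) :=
    (div_lt_iff₀ hgx).1 ((le_max_left _ _).trans_lt ht)
  have hty : n * By < t * (M1 * y 1 - Sy) :=
    (div_lt_iff₀ hgy).1 ((le_max_right _ _).trans_lt ht)
  set r : ℕ := n * P₁.length + m with hrdef
  have hr0 : (0 : ℝ) ≤ r := Nat.cast_nonneg r
  -- the profiles
  set Pp : List (List C) := rep n P₁ ++ rep t (rotBlock a₁ ++ rotBlock a₂) with hPpdef
  set Pq : List (List C) := rep r (Kblock a₁ a₂ b) ++ rotBlock a₁ with hPqdef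
  have vPp : ValidProfile Pp := validProfile_append (validProfile_rep hP₁ n)
    (validProfile_rep (validProfile_append (validProfile_rotBlock a₁)
      (validProfile_rotBlock a₂)) t)
  have vPq : ValidProfile Pq := validProfile_append
    (validProfile_rep (validProfile_Kblock ha h1b h2b) r) (validProfile_rotBlock a₁)
  -- score evaluation helpers
  have LA1 : (others a₁).length = m - 1 := length_others a₁
  have LA2 : (others a₂).length = m - 1 := length_others a₂
  have rxs1 : scoreTotal x (rotBlock a₁) a₁ = M1 * x 1 := by
    rw [scoreTotal_rotBlock_self, LA1, ← hM1]
  have rys1 : scoreTotal y (rotBlock a₁) a₁ = M1 * y 1 := by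
    rw [scoreTotal_rotBlock_self, LA1, ← hM1]
  have rxs2 : scoreTotal x (rotBlock a₂) a₂ = M1 * x 1 := by
    rw [scoreTotal_rotBlock_self, LA2, ← hM1]
  have rys2 : scoreTotal y (rotBlock a₂) a₂ = M1 * y 1 := by
    rw [scoreTotal_rotBlock_self, LA2, ← hM1]
  have rxn1 : ∀ z, z ≠ a₁ → scoreTotal x (rotBlock a₁) z = Sx := by
    intro z hz; rw [scoreTotal_rotBlock_ne x hz, LA1, ← hSx]
  have ryn1 : ∀ z, z ≠ a₁ → scoreTotal y (rotBlock a₁) z = Sy := by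
    intro z hz; rw [scoreTotal_rotBlock_ne y hz, LA1, ← hSy]
  have rxn2 : ∀ z, z ≠ a₂ → scoreTotal x (rotBlock a₂) z = Sx := by
    intro z hz; rw [scoreTotal_rotBlock_ne x hz, LA2, ← hSx]
  have ryn2 : ∀ z, z ≠ a₂ → scoreTotal y (rotBlock a₂) z = Sy := by
    intro z hz; rw [scoreTotal_rotBlock_ne y hz, LA2, ← hSy]
  have sPp : ∀ (s : ℕ → ℝ) (e : C), scoreTotal s Pp e
      = n * scoreTotal s P₁ e
        + t * (scoreTotal s (rotBlock a₁) e + scoreTotal s (rotBlock a₂) e) := by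
    intro s e
    rw [hPpdef, scoreTotal_append, scoreTotal_rep, scoreTotal_rep, scoreTotal_append]
  have sPq : ∀ (s : ℕ → ℝ) (e : C), scoreTotal s Pq e
      = r * scoreTotal s (Kblock a₁ a₂ b) e + scoreTotal s (rotBlock a₁) e := by
    intro s e
    rw [hPqdef, scoreTotal_append, scoreTotal_rep]
  -- fact: positions of "rest" candidates in K
  have hKother : ∀ (s : ℕ → ℝ), (∀ r r', 1 ≤ r → r ≤ r' → r' ≤ m → s r' ≤ s r) →
      ∀ z, z ≠ a₁ → z ≠ a₂ → z ≠ b →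
      scoreTotal s (Kblock a₁ a₂ b) z ≤ s 1 + s 2 + s 3 := by
    intro s hmono z hz1 hz2 hzb
    have hzr : z ∈ restList a₁ a₂ b := mem_restList.2 ⟨hz1, hz2, hzb⟩
    rw [scoreK_other ha h1b h2b s hzr]
    have hidx : (restList a₁ a₂ b).idxOf z < m - 3 := by
      rw [← length_restList ha h1b h2b hm3]
      exact List.idxOf_lt_length_iff.2 hzr
    have q1 := hmono 1 ((restList a₁ a₂ b).idxOf z + 4) le_rfl (by omega) (by omega)
    have q2 := hmono 2 ((restList a₁ a₂ b).idxOf z + 4) (by omega) (by omega) (by omega)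
    have q3 := hmono 3 ((restList a₁ a₂ b).idxOf z + 4) (by omega) (by omega) (by omega)
    linarith
  -- dominance facts
  have hXPp : ∀ z, scoreTotal x Pp z ≤ scoreTotal x Pp a₁ := by
    intro z
    by_cases hz1 : z = a₁
    · rw [hz1]
    rw [sPp x z, sPp x a₁, rxs1, rxn2 a₁ ha, rxn1 z hz1]
    by_cases hz2 : z = a₂
    · rw [hz2, rxs2]
      have hmul := mul_le_mul_of_nonneg_left (le_of_lt hXgt) (le_of_lt hn0)
      linarith
    · rw [rxn2 z hz2]
      have hb := mul_le_mul_of_nonneg_left (hBx z) (le_of_lt hn0)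
      linarith [htx]
  have hYPp : ∀ z, z ≠ a₂ → scoreTotal y Pp z < scoreTotal y Pp a₂ := by
    intro z hz2
    rw [sPp y z, sPp y a₂, rys2, ryn1 a₂ (Ne.symm ha), ryn2 z hz2]
    by_cases hz1 : z = a₁
    · rw [hz1, rys1]
      have hmul := mul_lt_mul_of_pos_left hYlt hn0
      linarith
    · rw [ryn1 z hz1]
      have hb := mul_le_mul_of_nonneg_left (hBy z) (le_of_lt hn0)
      linarith [hty]
  have hXPq : ∀ z, scoreTotal x Pq z ≤ scoreTotal x Pq a₁ := by
    intro z
    by_cases hz1 : z = a₁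
    · rw [hz1]
    rw [sPq x z, sPq x a₁, scoreK_a₁ ha h1b h2b, rxs1, rxn1 z hz1]
    by_cases hz2 : z = a₂
    · rw [hz2, scoreK_a₂ ha h1b h2b]; linarith
    by_cases hzb : z = b
    · rw [hzb, scoreK_b ha h1b h2b]; linarith
    · have hK := hKother x hx z hz1 hz2 hzb
      have hrk := mul_le_mul_of_nonneg_left hK hr0
      linarith
  have hYPq : ∀ z, scoreTotal y Pq z ≤ scoreTotal y Pq a₁ := by
    intro z
    by_cases hz1 : z = a₁
    · rw [hz1]
    rw [sPq y z, sPq y a₁, scoreK_a₁ ha h1b h2b, rys1, ryn1 z hz1]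
    by_cases hz2 : z = a₂
    · rw [hz2, scoreK_a₂ ha h1b h2b]; linarith
    by_cases hzb : z = b
    · rw [hzb, scoreK_b ha h1b h2b]; linarith
    · have hK := hKother y hy z hz1 hz2 hzb
      have hrk := mul_le_mul_of_nonneg_left hK hr0
      linarith
  have hXQ : ∀ z, scoreTotal x (Pp ++ Pq) z ≤ scoreTotal x (Pp ++ Pq) a₁ := by
    intro z
    have e1 := scoreTotal_append x Pp Pq z
    have e2 := scoreTotal_append x Pp Pq a₁
    rw [e1, e2]
    exact add_le_add (hXPp z) (hXPq z)
  have hYQ : ∀ z, z ≠ a₂ → scoreTotal y (Pp ++ Pq) z < scoreTotal y (Pp ++ Pq) a₂ := by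
    intro z hz2
    have e1 := scoreTotal_append y Pp Pq z
    have e2 := scoreTotal_append y Pp Pq a₂
    rw [e1, e2, sPp y z, sPp y a₂, sPq y z, sPq y a₂, rys2,
      ryn1 a₂ (Ne.symm ha), ryn2 z hz2, scoreK_a₂ ha h1b h2b]
    by_cases hz1 : z = a₁
    · rw [hz1, rys1, scoreK_a₁ ha h1b h2b]
      linarith [hny]
    · rw [ryn1 z hz1]
      have hb := mul_le_mul_of_nonneg_left (hBy z) (le_of_lt hn0)
      by_cases hzb : z = b
      · rw [hzb, scoreK_b ha h1b h2b]
        have hbb := mul_le_mul_of_nonneg_left (hBy b) (le_of_lt hn0)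
        linarith [hty, hbb]
      · have hK := hKother y hy z hz1 hz2 hzb
        have hrk := mul_le_mul_of_nonneg_left hK hr0
        linarith [hty]
  -- the tie-breaking order and the winners
  set T := topOrder a₁ with hTdef
  have eXPp : scoringWinner T x Pp = a₁ := scoringWinner_eq T x Pp a₁ hXPp (topOrder_le a₁)
  have eYPp : scoringWinner T y Pp = a₂ := scoringWinner_eq_strict T y Pp a₂ hYPp
  have eXPq : scoringWinner T x Pq = a₁ := scoringWinner_eq T x Pq a₁ hXPq (topOrder_le a₁)
  have eYPq : scoringWinner T y Pq = a₁ := scoringWinner_eq T y Pq a₁ hYPq (topOrder_le a₁)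
  have eXQ : scoringWinner T x (Pp ++ Pq) = a₁ :=
    scoringWinner_eq T x (Pp ++ Pq) a₁ hXQ (topOrder_le a₁)
  have eYQ : scoringWinner T y (Pp ++ Pq) = a₂ :=
    scoringWinner_eq_strict T y (Pp ++ Pq) a₂ hYQ
  -- pairwise counts
  have hNpp12 : pairN Pp a₁ a₂ = n * pairN P₁ a₁ a₂ + t * (m - 1) := by
    rw [hPpdef, pairN_append, pairN_rep, pairN_rep, pairN_append,
      pairN_rotBlock_top (Ne.symm ha), pairN_rotBlock_bot ha, LA1]
    ring
  have hNpp21 : pairN Pp a₂ a₁ = n * pairN P₁ a₂ a₁ + t * (m - 1) := by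
    rw [hPpdef, pairN_append, pairN_rep, pairN_rep, pairN_append,
      pairN_rotBlock_bot (Ne.symm ha), pairN_rotBlock_top ha, LA2]
    ring
  have hNq12 : pairN Pq a₁ a₂ = r * 1 + (m - 1) := by
    rw [hPqdef, pairN_append, pairN_rep, pairN_K_12 ha h1b h2b,
      pairN_rotBlock_top (Ne.symm ha), LA1]
  have hNq21 : pairN Pq a₂ a₁ = r * 2 := by
    rw [hPqdef, pairN_append, pairN_rep, pairN_K_21 ha h1b h2b,
      pairN_rotBlock_bot (Ne.symm ha)]
    ring
  -- run-off outcomes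
  have w1 : runoffWinner T (scoringWinner T x) (scoringWinner T y) Pp = a₁ := by
    have h := runoff_first T (scoringWinner T x) (scoringWinner T y) Pp
      (by rw [eXPp, eYPp]; exact ha)
      (by rw [eXPp, eYPp, hNpp21, hNpp12]
          exact Nat.add_le_add_right (Nat.mul_le_mul_left _ hδ) _)
      (by rw [eXPp, eYPp]; exact topOrder_not_lt a₁ a₂)
    rwa [eXPp] at h
  have w2 : runoffWinner T (scoringWinner T x) (scoringWinner T y) Pq = a₁ := by
    have h := runoff_agree T (scoringWinner T x) (scoringWinner T y) Pq
      (by rw [eXPq, eYPq])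
    rwa [eXPq] at h
  have w3 : runoffWinner T (scoringWinner T x) (scoringWinner T y) (Pp ++ Pq) = a₂ := by
    have h := runoff_second T (scoringWinner T x) (scoringWinner T y) (Pp ++ Pq)
      (by rw [eXQ, eYQ]; exact ha)
      (by have q1 := pairN_append Pp Pq a₁ a₂
          have q2 := pairN_append Pp Pq a₂ a₁
          rw [eXQ, eYQ, q1, q2, hNpp12, hNpp21, hNq12, hNq21, hrdef]
          have h1 : pairN P₁ a₁ a₂ ≤ P₁.length := pairN_le_length _ _ _
          have h2 : n * pairN P₁ a₁ a₂ ≤ n * P₁.length := Nat.mul_le_mul_left _ h1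
          set A := n * pairN P₁ a₁ a₂ with hA
          set B := n * P₁.length with hB
          set A' := n * pairN P₁ a₂ a₁ with hA'
          set Ct := t * (m - 1) with hCt
          omega)
    rwa [eYQ] at h
  exact ⟨T, Pp, Pq, vPp, vPq, by rw [w1, w2], by rw [w3, w1]; exact Ne.symm ha⟩
/-- Let `X` and `Y` be scoring rules given by non-increasing scoring vectors
`x` and `y` (positions `1,…,m`, `m = |C|`). If on some profile `P₁` two
distinct candidates `a₁, a₂` satisfy: `a₁` has strictly larger `X`-score than
`a₂` but strictly smaller `Y`-score, then `X + Y` is not consistent: there are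
a tie-breaking order `T` and profiles `P`, `P′` on which `X + Y` (using `T`
throughout) elects the same candidate, yet elects a different candidate on
`P ++ P′`. -/
theorem runoff_scoring_not_consistent [Nonempty C]
    (x y : ℕ → ℝ)
    (hx : ∀ r r', 1 ≤ r → r ≤ r' → r' ≤ Fintype.card C → x r' ≤ x r)
    (hy : ∀ r r', 1 ≤ r → r ≤ r' → r' ≤ Fintype.card C → y r' ≤ y r)
    (P₁ : List (List C)) (hP₁ : ValidProfile P₁)
    (a₁ a₂ : C) (ha : a₁ ≠ a₂)
    (hXgt : scoreTotal x P₁ a₂ < scoreTotal x P₁ a₁)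
    (hYlt : scoreTotal y P₁ a₁ < scoreTotal y P₁ a₂) :
    ∃ (T : LinearOrder C) (P P' : List (List C)),
      ValidProfile P ∧ ValidProfile P' ∧
      runoffWinner T (scoringWinner T x) (scoringWinner T y) P
        = runoffWinner T (scoringWinner T x) (scoringWinner T y) P' ∧
      runoffWinner T (scoringWinner T x) (scoringWinner T y) (P ++ P')
        ≠ runoffWinner T (scoringWinner T x) (scoringWinner T y) P := by
  rcases le_total (pairN P₁ a₂ a₁) (pairN P₁ a₁ a₂) with h | h
  · exact main_aux x y hx hy P₁ hP₁ a₁ a₂ ha hXgt hYlt h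
  · obtain ⟨T, P, P', v1, v2, heq, hne⟩ :=
      main_aux y x hy hx P₁ hP₁ a₂ a₁ (Ne.symm ha) hYlt hXgt h
    have hc : ∀ Z, runoffWinner T (scoringWinner T x) (scoringWinner T y) Z
        = runoffWinner T (scoringWinner T y) (scoringWinner T x) Z :=
      fun Z => runoff_comm T _ _ Z
    exact ⟨T, P, P', v1, v2, by simp only [hc]; exact heq, by simp only [hc]; exact hne⟩
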